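/- Let (X,d) be a metric space with basepoint * such that (X,*,d) is 0-hyperbolic. Then there exists an ℝ-tree (T, d_T) and an isometric embedding i : X → T such that: (1) no proper subtree of T contains i(X), i.e., every connected subset of T containing i(X) equals T; and (2) for every ℝ-tree T' and every isometric embedding j : X → T' there is a unique isometric embedding k : T → T' with k ∘ i = j. In particular, T is unique up to isometry. -/

import Mathlib

/-- An *arc* from `x` to `y` in a metric space: the image of a topological embedding of a
closed real interval `[a,b]` (with `a = b` allowed) sending `a` to `x` and `b` to `y`.
Since `[a,b]` is compact and a metric space is Hausdorff, a topological embedding is the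
same as a continuous injective map. -/
def IsArcIn {T : Type*} [MetricSpace T] (x y : T) (S : Set T) : Prop :=
  ∃ a b : ℝ, a ≤ b ∧ ∃ α : ℝ → T,
    ContinuousOn α (Set.Icc a b) ∧ Set.InjOn α (Set.Icc a b) ∧
    α '' Set.Icc a b = S ∧ α a = x ∧ α b = y

/-- A *geodesic segment* from `x` to `y`: the image of an isometric embedding of a closed
real interval sending the endpoints to `x` and `y`. -/
def IsGeodesicSegmentIn {T : Type*} [MetricSpace T] (x y : T) (S : Set T) : Prop :=
  ∃ a b : ℝ, a ≤ b ∧ ∃ α : ℝ → T,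
    (∀ s ∈ Set.Icc a b, ∀ t ∈ Set.Icc a b, dist (α s) (α t) = |s - t|) ∧
    α '' Set.Icc a b = S ∧ α a = x ∧ α b = y

/-- An ℝ-tree: a metric space in which any two points are joined by a unique arc,
and this arc is a geodesic segment. -/
def IsRTree (T : Type*) [MetricSpace T] : Prop :=
  ∀ x y : T, (∃! S : Set T, IsArcIn x y S) ∧
    ∀ S : Set T, IsArcIn x y S → IsGeodesicSegmentIn x y S

/-- The Gromov product `(x·y)_w = (d(w,x) + d(w,y) − d(x,y))/2`. -/
noncomputable def gromovProd {T : Type*} [MetricSpace T] (w x y : T) : ℝ :=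
  (dist w x + dist w y - dist x y) / 2

universe u

/-- `T` is a tree hull of `X`: `T` is an ℝ-tree together with an isometric embedding
`i : X → T` such that (1) no proper subtree of `T` contains `i(X)`, and (2) every isometric
embedding of `X` into an ℝ-tree `T'` factors uniquely through an isometric embedding
`k : T → T'` with `k ∘ i = j`. -/
def IsTreeHull (X : Type u) [MetricSpace X] (T : Type u) [MetricSpace T] : Prop :=
  IsRTree T ∧ ∃ i : X → T, Isometry i ∧
    (∀ S : Set T, IsConnected S → Set.range i ⊆ S → S = Set.univ) ∧
    ∀ (T' : Type u) [MetricSpace T'], IsRTree T' → ∀ j : X → T', Isometry j →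
      ∃! k : T → T', Isometry k ∧ k ∘ i = j

namespace CTD
open Set

variable {Z : Type*} [MetricSpace Z]

theorem gromovProd_nonneg (r x y : Z) : 0 ≤ gromovProd r x y := by
  have h := dist_triangle x r y
  rw [dist_comm x r] at h
  simp only [gromovProd]; linarith

theorem gromovProd_le_left (r x y : Z) : gromovProd r x y ≤ dist r x := by
  have h := dist_triangle r x y
  simp only [gromovProd]; linarith

/-- A point between two points of a connected set (w.r.t. a 0-hyperbolic metric)
belongs to the set. -/
theorem mem_of_between
    (hyp : ∀ r a b c : Z, min (gromovProd r a c) (gromovProd r b c) ≤ gromovProd r a b)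
    {p q r : Z} (hbtw : dist p r + dist r q = dist p q) (hrp : r ≠ p) (hrq : r ≠ q)
    {S : Set Z} (hS : IsPreconnected S) (hp : p ∈ S) (hq : q ∈ S) : r ∈ S := by
  by_contra hrS
  have hUopen : IsOpen {z : Z | 0 < gromovProd r p z} := by
    rw [Metric.isOpen_iff]
    intro z hz
    refine ⟨gromovProd r p z, hz, fun z' hz' => ?_⟩
    rw [Metric.mem_ball] at hz'
    have h1 : gromovProd r p z - dist z z' ≤ gromovProd r p z' := by
      have a1 := dist_triangle r z' z
      have a2 := dist_triangle p z z'
      have a3 : dist z' z = dist z z' := dist_comm _ _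
      simp only [gromovProd]; linarith
    have : dist z' z = dist z z' := dist_comm _ _
    simp only [mem_setOf_eq] at hz ⊢
    linarith
  have hVopen : IsOpen {z : Z | 0 < dist r z ∧ gromovProd r p z ≤ 0} := by
    rw [Metric.isOpen_iff]
    intro z hz
    obtain ⟨hz1, hz2⟩ := hz
    refine ⟨dist r z, hz1, fun z' hz' => ?_⟩
    rw [Metric.mem_ball] at hz'
    have a1 := dist_triangle r z' z
    have a3 : dist z' z = dist z z' := dist_comm _ _
    have hrz' : 0 < dist r z' := by linarith
    have hzz' : 0 < gromovProd r z z' := by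
      simp only [gromovProd]; linarith
    have hmin := hyp r p z z'
    refine ⟨hrz', ?_⟩
    rcases min_le_iff.mp (le_trans hmin hz2) with h | h
    · exact h
    · linarith
  have hpU : p ∈ {z : Z | 0 < gromovProd r p z} := by
    have : gromovProd r p p = dist r p := by
      simp only [gromovProd, dist_self]; ring
    simp only [mem_setOf_eq, this]
    exact dist_pos.mpr (fun h => hrp h)
  have hqV : q ∈ {z : Z | 0 < dist r z ∧ gromovProd r p z ≤ 0} := by
    constructor
    · exact dist_pos.mpr (fun h => hrq h)
    · have : gromovProd r p q = 0 := by
        simp only [gromovProd]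
        rw [dist_comm r p]
        linarith
      linarith [this.le]
  have hsub : S ⊆ {z : Z | 0 < gromovProd r p z} ∪ {z : Z | 0 < dist r z ∧ gromovProd r p z ≤ 0} := by
    intro z hzS
    have hzr : z ≠ r := fun h => hrS (h ▸ hzS)
    have : 0 < dist r z := dist_pos.mpr (fun h => hzr h.symm)
    rcases le_or_gt (gromovProd r p z) 0 with h | h
    · exact Or.inr ⟨this, h⟩
    · exact Or.inl h
  obtain ⟨z, hzS, hz1, hz2⟩ := hS _ _ hUopen hVopen hsub ⟨p, hp, hpU⟩ ⟨q, hq, hqV⟩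
  exact absurd hz1 (not_lt.mpr hz2.2)

/-- Auxiliary real-number lemma for the four-point inequality. -/
theorem min4_aux {Y : Type*} (g : Y → Y → ℝ) (gsymm : ∀ a b, g a b = g b a)
    (gh : ∀ a b c, min (g a c) (g b c) ≤ g a b) (p q r s : Y)
    (h1 : g p r ≤ g q s) (h2 : g p r ≤ g p s) (h3 : g p r ≤ g q r) :
    min (g p r + g q s) (g p s + g q r) ≤ g p q + g r s := by
  have hrs : g p r ≤ g r s := by
    have := gh r s p
    rw [gsymm r p, gsymm s p, min_eq_left h2] at this
    exact this
  rcases le_total (g p s) (g q s) with h | h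
  · have hpq : g p s ≤ g p q := by
      have := gh p q s
      rw [min_eq_left h] at this
      exact this
    rcases le_total (g q r) (g q s) with h' | h'
    · have : g q r ≤ g r s := by
        have hh := gh r s q
        rw [gsymm r q, gsymm s q, min_eq_left h'] at hh
        exact hh
      exact min_le_of_right_le (by linarith)
    · have : g q s ≤ g r s := by
        have hh := gh r s q
        rw [gsymm r q, gsymm s q, min_eq_right h'] at hh
        exact hh
      exact min_le_of_left_le (by linarith)
  · have hpq : g q s ≤ g p q := by
      have := gh p q s
      rw [min_eq_right h] at this
      exact this
    exact min_le_of_left_le (by linarith)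

theorem min4 {Y : Type*} (g : Y → Y → ℝ) (gsymm : ∀ a b, g a b = g b a)
    (gh : ∀ a b c, min (g a c) (g b c) ≤ g a b) (p q r s : Y) :
    min (g p r + g q s) (g p s + g q r) ≤ g p q + g r s := by
  rcases le_total (min (g p r) (g q s)) (min (g p s) (g q r)) with hA | hA <;>
    [rcases le_total (g p r) (g q s) with hB | hB;
     rcases le_total (g p s) (g q r) with hB | hB]
  · -- g p r is the min
    have hm := min_eq_left hB ▸ hA
    exact min4_aux g gsymm gh p q r s hB (le_trans hm (min_le_left _ _))
      (le_trans hm (min_le_right _ _))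
  · -- g q s is the min
    have hm : g q s ≤ min (g p s) (g q r) := min_eq_right hB ▸ hA
    have := min4_aux g gsymm gh q p s r hB (le_trans hm (min_le_right _ _))
      (le_trans hm (min_le_left _ _))
    rw [gsymm q p, gsymm s r] at this
    rcases min_le_iff.mp this with h | h
    · exact min_le_of_left_le (by linarith)
    · exact min_le_of_right_le (by linarith)
  · -- g p s is the min
    have hm : g p s ≤ min (g p r) (g q s) := min_eq_left hB ▸ hA
    have := min4_aux g gsymm gh p q s r hB (le_trans hm (min_le_left _ _))
      (le_trans hm (min_le_right _ _))
    rw [gsymm s r] at this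
    rcases min_le_iff.mp this with h | h
    · exact min_le_of_right_le (by linarith)
    · exact min_le_of_left_le (by linarith)
  · -- g q r is the min
    have hm : g q r ≤ min (g p r) (g q s) := min_eq_right hB ▸ hA
    have := min4_aux g gsymm gh q p r s hB (le_trans hm (min_le_right _ _))
      (le_trans hm (min_le_left _ _))
    rw [gsymm q p] at this
    rcases min_le_iff.mp this with h | h
    · exact min_le_of_right_le (by linarith)
    · exact min_le_of_left_le (by linarith)

theorem hyp_of_four_pt
    (h4 : ∀ p q r s : Z, dist p q + dist r s ≤ max (dist p r + dist q s) (dist p s + dist q r)) :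
    ∀ r a b c : Z, min (gromovProd r a c) (gromovProd r b c) ≤ gromovProd r a b := by
  intro r a b c
  have h := h4 a b c r
  have e1 : dist c r = dist r c := dist_comm _ _
  have e2 : dist b r = dist r b := dist_comm _ _
  have e3 : dist a r = dist r a := dist_comm _ _
  rcases le_max_iff.mp h with h' | h'
  · apply min_le_of_left_le
    simp only [gromovProd]; linarith
  · apply min_le_of_right_le
    simp only [gromovProd]; linarith

open Set

variable {Z : Type*} [MetricSpace Z]

theorem short_continuousOn {α : ℝ → Z} {s : Set ℝ}
    (h : ∀ u ∈ s, ∀ v ∈ s, dist (α u) (α v) ≤ |u - v|) : ContinuousOn α s := by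
  rw [Metric.continuousOn_iff]
  intro b hb ε hε
  exact ⟨ε, hε, fun a ha hab => lt_of_le_of_lt (h a ha b hb) (by rwa [Real.dist_eq] at hab)⟩

theorem iso_isArc {α : ℝ → Z} {a b : ℝ} (hab : a ≤ b)
    (hiso : ∀ s ∈ Icc a b, ∀ t ∈ Icc a b, dist (α s) (α t) = |s - t|) :
    IsArcIn (α a) (α b) (α '' Icc a b) := by
  refine ⟨a, b, hab, α, short_continuousOn (fun u hu v hv => (hiso u hu v hv).le), ?_, rfl, rfl, rfl⟩
  intro u hu v hv huv
  have := hiso u hu v hv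
  rw [huv, dist_self] at this
  have := abs_eq_zero.mp this.symm
  linarith

/-- Normalized geodesic between two points of an ℝ-tree, starting at parameter `0`. -/
theorem exists_geo {T' : Type*} [MetricSpace T'] (hT : IsRTree T') (x y : T') :
    ∃ γ : ℝ → T',
      (∀ s ∈ Icc 0 (dist x y), ∀ t ∈ Icc 0 (dist x y), dist (γ s) (γ t) = |s - t|) ∧
      γ 0 = x ∧ γ (dist x y) = y ∧
      ∀ A : Set T', IsArcIn x y A → A = γ '' Icc 0 (dist x y) := by
  obtain ⟨S, hS, huniq⟩ := (hT x y).1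
  obtain ⟨a, b, hab, α, hiso, himg, ha, hb⟩ := (hT x y).2 S hS
  have hd : dist x y = b - a := by
    have := hiso a ⟨le_refl a, hab⟩ b ⟨hab, le_refl b⟩
    rw [ha, hb, abs_of_nonpos (by linarith)] at this
    linarith
  refine ⟨fun u => α (a + u), ?_, ?_, ?_, ?_⟩
  · intro s hs t ht
    rw [hd] at hs ht
    have h1 : a + s ∈ Icc a b := ⟨by linarith [hs.1], by linarith [hs.2]⟩
    have h2 : a + t ∈ Icc a b := ⟨by linarith [ht.1], by linarith [ht.2]⟩
    rw [hiso _ h1 _ h2]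
    congr 1
    ring
  · simpa using ha
  · rw [hd]; simpa using hb
  · intro A hA
    rw [huniq A hA, ← himg]
    ext z
    constructor
    · rintro ⟨u, hu, rfl⟩
      exact ⟨u - a, by rw [hd]; exact ⟨by linarith [hu.1], by linarith [hu.2]⟩, by simp⟩
    · rintro ⟨u, hu, rfl⟩
      rw [hd] at hu
      exact ⟨a + u, ⟨by linarith [hu.1], by linarith [hu.2]⟩, rfl⟩

theorem geo_param_unique {T' : Type*} [MetricSpace T'] {γ δ : ℝ → T'} {L : ℝ}
    (hγ : ∀ s ∈ Icc (0:ℝ) L, ∀ t ∈ Icc (0:ℝ) L, dist (γ s) (γ t) = |s - t|)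
    (hδ : ∀ s ∈ Icc (0:ℝ) L, ∀ t ∈ Icc (0:ℝ) L, dist (δ s) (δ t) = |s - t|)
    (h00 : γ 0 = δ 0) (himg : γ '' Icc 0 L = δ '' Icc 0 L) :
    ∀ u ∈ Icc (0:ℝ) L, γ u = δ u := by
  intro u hu
  have hL : (0:ℝ) ≤ L := le_trans hu.1 hu.2
  have h0m : (0:ℝ) ∈ Icc (0:ℝ) L := ⟨le_refl _, hL⟩
  have : γ u ∈ δ '' Icc 0 L := himg ▸ mem_image_of_mem γ hu
  obtain ⟨t, ht, heq⟩ := this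
  have h1 : dist (δ 0) (δ t) = t := by
    rw [hδ 0 h0m t ht, abs_of_nonpos (by linarith [ht.1])]; ring
  have h2 : dist (γ 0) (γ u) = u := by
    rw [hγ 0 h0m u hu, abs_of_nonpos (by linarith [hu.1])]; ring
  rw [h00, ← heq] at h2
  rw [h1] at h2
  rw [← heq, h2]

/-- Two geodesics issuing from a common point in an ℝ-tree coincide up to some `c`,
diverge after, and the distance between their endpoints is given by `c`. -/
theorem geo_coincide {T' : Type*} [MetricSpace T'] (hT : IsRTree T') {γ δ : ℝ → T'} {L1 L2 : ℝ}
    (hL1 : 0 ≤ L1) (hL2 : 0 ≤ L2)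
    (hγ : ∀ s ∈ Icc (0:ℝ) L1, ∀ t ∈ Icc (0:ℝ) L1, dist (γ s) (γ t) = |s - t|)
    (hδ : ∀ s ∈ Icc (0:ℝ) L2, ∀ t ∈ Icc (0:ℝ) L2, dist (δ s) (δ t) = |s - t|)
    (h00 : γ 0 = δ 0) :
    ∃ c, 0 ≤ c ∧ c ≤ L1 ∧ c ≤ L2 ∧ (∀ u, 0 ≤ u → u ≤ c → γ u = δ u) ∧
      (∀ u, 0 ≤ u → u ≤ L1 → u ≤ L2 → γ u = δ u → u ≤ c) ∧
      dist (γ L1) (δ L2) = L1 + L2 - 2 * c := by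
  classical
  set C : Set ℝ := {u : ℝ | 0 ≤ u ∧ u ≤ L1 ∧ u ≤ L2 ∧ γ u = δ u} with hC
  have hC0 : (0:ℝ) ∈ C := ⟨le_refl _, hL1, hL2, h00⟩
  have hCne : C.Nonempty := ⟨0, hC0⟩
  have hbdd : BddAbove C := ⟨L1, fun u hu => hu.2.1⟩
  set c := sSup C with hc
  have hc0 : 0 ≤ c := le_csSup hbdd hC0
  have hcL1 : c ≤ L1 := csSup_le hCne (fun u hu => hu.2.1)
  have hcL2 : c ≤ L2 := csSup_le hCne (fun u hu => hu.2.2.1)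
  have hceq : γ c = δ c := by
    have key : ∀ ε : ℝ, 0 < ε → dist (γ c) (δ c) ≤ 0 + ε := by
      intro ε hε
      obtain ⟨u, huC, hlt⟩ := exists_lt_of_lt_csSup hCne (show c - ε/2 < c by linarith)
      have huc : u ≤ c := le_csSup hbdd huC
      obtain ⟨hu0, huL1, huL2, hueq⟩ := huC
      have d1 : dist (γ c) (γ u) = c - u := by
        rw [hγ c ⟨hc0, hcL1⟩ u ⟨hu0, huL1⟩, abs_of_nonneg (by linarith)]
      have d2 : dist (δ u) (δ c) = c - u := by
        rw [hδ u ⟨hu0, huL2⟩ c ⟨hc0, hcL2⟩, abs_of_nonpos (by linarith)]; ring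
      calc dist (γ c) (δ c) ≤ dist (γ c) (γ u) + dist (γ u) (δ c) := dist_triangle _ _ _
        _ = (c - u) + dist (δ u) (δ c) := by rw [d1, hueq]
        _ = (c - u) + (c - u) := by rw [d2]
        _ ≤ 0 + ε := by linarith
    have := le_of_forall_pos_le_add key
    have h0 : dist (γ c) (δ c) = 0 := le_antisymm (by linarith) dist_nonneg
    exact dist_le_zero.mp h0.le
  have hdown : ∀ u, 0 ≤ u → u ≤ c → γ u = δ u := by
    intro u hu0 huc
    have hγ' : ∀ s ∈ Icc (0:ℝ) c, ∀ t ∈ Icc (0:ℝ) c, dist (γ s) (γ t) = |s - t| :=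
      fun s hs t ht => hγ s ⟨hs.1, le_trans hs.2 hcL1⟩ t ⟨ht.1, le_trans ht.2 hcL1⟩
    have hδ' : ∀ s ∈ Icc (0:ℝ) c, ∀ t ∈ Icc (0:ℝ) c, dist (δ s) (δ t) = |s - t| :=
      fun s hs t ht => hδ s ⟨hs.1, le_trans hs.2 hcL2⟩ t ⟨ht.1, le_trans ht.2 hcL2⟩
    have hA1 : IsArcIn (γ 0) (γ c) (γ '' Icc 0 c) := iso_isArc hc0 hγ'
    have hA2 : IsArcIn (γ 0) (γ c) (δ '' Icc 0 c) := by
      have := iso_isArc hc0 hδ'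
      rwa [← h00, ← hceq] at this
    obtain ⟨S, hS, huniq⟩ := (hT (γ 0) (γ c)).1
    have himg : γ '' Icc 0 c = δ '' Icc 0 c := by
      rw [huniq _ hA1, huniq _ hA2]
    exact geo_param_unique hγ' hδ' h00 himg u ⟨hu0, huc⟩
  refine ⟨c, hc0, hcL1, hcL2, hdown, fun u h1 h2 h3 h4 => le_csSup hbdd ⟨h1, h2, h3, h4⟩, ?_⟩
  -- the concatenated path is an arc, hence a geodesic segment
  set E := (L1 - c) + (L2 - c) with hE
  have hE0 : 0 ≤ E := by linarith
  set conc : ℝ → T' := fun u => if u ≤ L1 - c then γ (L1 - u) else δ (u - L1 + 2*c) with hconc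
  have hconc1 : ∀ u, 0 ≤ u → u ≤ L1 - c → conc u = γ (L1 - u) := by
    intro u h1 h2; simp only [hconc]; rw [if_pos h2]
  have hconc2 : ∀ u, L1 - c < u → conc u = δ (u - L1 + 2*c) := by
    intro u h1; simp only [hconc]; rw [if_neg (not_le.mpr h1)]
  have hmem1 : ∀ u, 0 ≤ u → u ≤ L1 - c → L1 - u ∈ Icc (0:ℝ) L1 :=
    fun u h1 h2 => ⟨by linarith, by linarith⟩
  have hmem2 : ∀ u, L1 - c < u → u ≤ E → u - L1 + 2*c ∈ Icc (0:ℝ) L2 :=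
    fun u h1 h2 => ⟨by linarith, by linarith⟩
  have hshort : ∀ u ∈ Icc (0:ℝ) E, ∀ v ∈ Icc (0:ℝ) E, u ≤ v → dist (conc u) (conc v) ≤ v - u := by
    intro u hu v hv huv
    rcases le_or_gt v (L1 - c) with h | h
    · rw [hconc1 u hu.1 (le_trans huv h), hconc1 v hv.1 h]
      rw [hγ _ (hmem1 u hu.1 (le_trans huv h)) _ (hmem1 v hv.1 h)]
      rw [abs_of_nonneg (by linarith)]; linarith
    · rcases le_or_gt u (L1 - c) with h' | h'
      · rw [hconc1 u hu.1 h', hconc2 v h]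
        have step : dist (γ (L1 - u)) (δ (v - L1 + 2*c)) ≤
            dist (γ (L1 - u)) (γ c) + dist (δ c) (δ (v - L1 + 2*c)) := by
          calc dist (γ (L1 - u)) (δ (v - L1 + 2*c))
              ≤ dist (γ (L1 - u)) (γ c) + dist (γ c) (δ (v - L1 + 2*c)) := dist_triangle _ _ _
            _ = dist (γ (L1 - u)) (γ c) + dist (δ c) (δ (v - L1 + 2*c)) := by rw [hceq]
        have d1 : dist (γ (L1 - u)) (γ c) = L1 - u - c := by
          rw [hγ _ (hmem1 u hu.1 h') c ⟨hc0, hcL1⟩, abs_of_nonneg (by linarith)]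
        have d2 : dist (δ c) (δ (v - L1 + 2*c)) = v - L1 + c := by
          rw [hδ c ⟨hc0, hcL2⟩ _ (hmem2 v h hv.2), abs_of_nonpos (by linarith)]; ring
        rw [d1, d2] at step; linarith
      · rw [hconc2 u h', hconc2 v h]
        rw [hδ _ (hmem2 u h' hu.2) _ (hmem2 v h hv.2), abs_of_nonpos (by linarith)]
        linarith
  have hshort' : ∀ u ∈ Icc (0:ℝ) E, ∀ v ∈ Icc (0:ℝ) E, dist (conc u) (conc v) ≤ |u - v| := by
    intro u hu v hv
    rcases le_total u v with h | h
    · rw [abs_of_nonpos (by linarith)]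
      have := hshort u hu v hv h; linarith
    · rw [abs_of_nonneg (by linarith), dist_comm]
      have := hshort v hv u hu h; linarith
  have hinj : ∀ u ∈ Icc (0:ℝ) E, ∀ v ∈ Icc (0:ℝ) E, u ≤ v → conc u = conc v → u = v := by
    intro u hu v hv huv heq
    rcases le_or_gt v (L1 - c) with h | h
    · -- both on γ branch
      have := hγ _ (hmem1 u hu.1 (le_trans huv h)) _ (hmem1 v hv.1 h)
      rw [hconc1 u hu.1 (le_trans huv h), hconc1 v hv.1 h] at heq
      rw [heq, dist_self] at this
      have := abs_eq_zero.mp this.symm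
      linarith
    · rcases le_or_gt u (L1 - c) with h' | h'
      · -- mixed: impossible
        exfalso
        rw [hconc1 u hu.1 h', hconc2 v h] at heq
        have e1 : dist (δ 0) (γ (L1 - u)) = L1 - u := by
          rw [← h00, hγ 0 ⟨le_refl _, hL1⟩ _ (hmem1 u hu.1 h'), abs_of_nonpos (by linarith)]
          ring
        have e2 : dist (δ 0) (δ (v - L1 + 2*c)) = v - L1 + 2*c := by
          rw [hδ 0 ⟨le_refl _, hL2⟩ _ (hmem2 v h hv.2), abs_of_nonpos (by linarith)]
          ring
        rw [heq, e2] at e1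
        have hv2 := hv.2
        have hu0 := hu.1
        have hγs : γ (L1 - u) = δ (L1 - u) := by
          have harg : v - L1 + 2*c = L1 - u := by linarith
          rw [heq, harg]
        have hsc : L1 - u ≤ c :=
          le_csSup hbdd ⟨by linarith, by linarith, by linarith, hγs⟩
        linarith
      · have := hδ _ (hmem2 u h' hu.2) _ (hmem2 v h hv.2)
        rw [hconc2 u h', hconc2 v h] at heq
        rw [heq, dist_self] at this
        have := abs_eq_zero.mp this.symm
        linarith
  have hend0 : conc 0 = γ L1 := by rw [hconc1 0 (le_refl _) (by linarith)]; norm_num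
  have hendE : conc E = δ L2 := by
    rcases le_or_gt E (L1 - c) with h | h
    · have hL2c : L2 = c := by simp only [hE] at h; linarith
      rw [hconc1 E hE0 h]
      have : L1 - E = c := by simp only [hE]; linarith
      rw [this, hceq, hL2c]
    · rw [hconc2 E h]
      congr 1
      simp only [hE]; ring
  have hArc : IsArcIn (γ L1) (δ L2) (conc '' Icc 0 E) := by
    refine ⟨0, E, hE0, conc, short_continuousOn hshort', ?_, rfl, hend0, hendE⟩
    intro u hu v hv heq
    rcases le_total u v with h | h
    · exact hinj u hu v hv h heq
    · exact (hinj v hv u hu h heq.symm).symm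
  obtain ⟨a, b, hab, ζ, hζ, himg, hζa, hζb⟩ := (hT (γ L1) (δ L2)).2 _ hArc
  have hmmem : γ c ∈ conc '' Icc 0 E := by
    refine ⟨L1 - c, ⟨by linarith, by linarith⟩, ?_⟩
    rw [hconc1 _ (by linarith) (le_refl _)]
    congr 1; ring
  rw [← himg] at hmmem
  obtain ⟨u₀, hu₀, hu₀eq⟩ := hmmem
  have d1 : dist (ζ a) (ζ u₀) = u₀ - a := by
    rw [hζ a ⟨le_refl _, hab⟩ u₀ hu₀, abs_of_nonpos (by linarith [hu₀.1])]; ring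
  have d2 : dist (ζ u₀) (ζ b) = b - u₀ := by
    rw [hζ u₀ hu₀ b ⟨hab, le_refl _⟩, abs_of_nonpos (by linarith [hu₀.2])]; ring
  have d3 : dist (ζ a) (ζ b) = b - a := by
    rw [hζ a ⟨le_refl _, hab⟩ b ⟨hab, le_refl _⟩, abs_of_nonpos (by linarith)]; ring
  have e1 : dist (γ L1) (γ c) = L1 - c := by
    rw [hγ L1 ⟨hL1, le_refl _⟩ c ⟨hc0, hcL1⟩, abs_of_nonneg (by linarith)]
  have e2 : dist (δ c) (δ L2) = L2 - c := by
    rw [hδ c ⟨hc0, hcL2⟩ L2 ⟨hL2, le_refl _⟩, abs_of_nonpos (by linarith)]; ring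
  rw [hζa, hu₀eq, e1] at d1
  rw [hu₀eq, hζb, hceq, e2] at d2
  rw [hζa, hζb] at d3
  rw [d3]
  linarith

/-- Full distance formula between points on two geodesics issuing from a common point. -/
theorem geo_dist {T' : Type*} [MetricSpace T'] (hT : IsRTree T') {γ δ : ℝ → T'} {L1 L2 : ℝ}
    (hL1 : 0 ≤ L1) (hL2 : 0 ≤ L2)
    (hγ : ∀ s ∈ Icc (0:ℝ) L1, ∀ t ∈ Icc (0:ℝ) L1, dist (γ s) (γ t) = |s - t|)
    (hδ : ∀ s ∈ Icc (0:ℝ) L2, ∀ t ∈ Icc (0:ℝ) L2, dist (δ s) (δ t) = |s - t|)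
    (h00 : γ 0 = δ 0) :
    ∃ c, 0 ≤ c ∧ c ≤ L1 ∧ c ≤ L2 ∧ (∀ u, 0 ≤ u → u ≤ c → γ u = δ u) ∧
      ∀ s, 0 ≤ s → s ≤ L1 → ∀ t, 0 ≤ t → t ≤ L2 →
        dist (γ s) (δ t) = s + t - 2 * min s (min t c) := by
  obtain ⟨c, hc0, hcL1, hcL2, hcoin, hmax, _⟩ := geo_coincide hT hL1 hL2 hγ hδ h00
  refine ⟨c, hc0, hcL1, hcL2, hcoin, ?_⟩
  intro s hs0 hsL1 t ht0 htL2
  have hγ' : ∀ u ∈ Icc (0:ℝ) s, ∀ v ∈ Icc (0:ℝ) s, dist (γ u) (γ v) = |u - v| :=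
    fun u hu v hv => hγ u ⟨hu.1, le_trans hu.2 hsL1⟩ v ⟨hv.1, le_trans hv.2 hsL1⟩
  have hδ' : ∀ u ∈ Icc (0:ℝ) t, ∀ v ∈ Icc (0:ℝ) t, dist (δ u) (δ v) = |u - v| :=
    fun u hu v hv => hδ u ⟨hu.1, le_trans hu.2 htL2⟩ v ⟨hv.1, le_trans hv.2 htL2⟩
  obtain ⟨c', hc'0, hc's, hc't, hcoin', hmax', hdist'⟩ := geo_coincide hT hs0 ht0 hγ' hδ' h00
  have hkey : c' = min s (min t c) := by
    apply le_antisymm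
    · refine le_min hc's (le_min hc't ?_)
      exact hmax c' hc'0 (le_trans hc's hsL1) (le_trans hc't htL2) (hcoin' c' hc'0 le_rfl)
    · have hm0 : 0 ≤ min s (min t c) := le_min hs0 (le_min ht0 hc0)
      refine hmax' _ hm0 (min_le_left _ _) (le_trans (min_le_right _ _) (min_le_left _ _)) ?_
      exact hcoin _ hm0 (le_trans (min_le_right _ _) (min_le_right _ _))
  rw [hdist', hkey]

theorem gromovProd_comm (w x y : Z) : gromovProd w x y = gromovProd w y x := by
  simp only [gromovProd, dist_comm x y]; ring

theorem gromovProd_self (w x : Z) : gromovProd w x x = dist w x := by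
  simp only [gromovProd, dist_self]; ring

/-- A pointed 0-hyperbolic metric space. -/
structure HypPt (X : Type u) [MetricSpace X] : Type u where
  w : X
  hyp : ∀ x y z : X, min (gromovProd w x z) (gromovProd w y z) ≤ gromovProd w x y

variable {X : Type u} [MetricSpace X]

/-- Points of the tree hull: pairs of a point `x` of `X` and a height `t ∈ [0, d(w,x)]`. -/
structure Pre (d : HypPt X) : Type u where
  pt : X
  ht : ℝ
  ht0 : 0 ≤ ht
  htle : ht ≤ dist d.w pt

variable (d : HypPt X)

/-- The Gromov-product-like pairing on `Pre d`. -/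
noncomputable def gpp (p q : Pre d) : ℝ := min p.ht (min q.ht (gromovProd d.w p.pt q.pt))

theorem gpp_nonneg (p q : Pre d) : 0 ≤ gpp d p q :=
  le_min p.ht0 (le_min q.ht0 (gromovProd_nonneg _ _ _))

theorem gpp_le_left (p q : Pre d) : gpp d p q ≤ p.ht := min_le_left _ _

theorem gpp_le_right (p q : Pre d) : gpp d p q ≤ q.ht :=
  le_trans (min_le_right _ _) (min_le_left _ _)

theorem gpp_le_g (p q : Pre d) : gpp d p q ≤ gromovProd d.w p.pt q.pt :=
  le_trans (min_le_right _ _) (min_le_right _ _)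

theorem gpp_comm (p q : Pre d) : gpp d p q = gpp d q p := by
  simp only [gpp, gromovProd_comm d.w q.pt p.pt]
  rw [min_left_comm]

theorem gpp_hyp (p q r : Pre d) : min (gpp d p r) (gpp d q r) ≤ gpp d p q := by
  refine le_min (le_trans (min_le_left _ _) (gpp_le_left d p r))
    (le_min (le_trans (min_le_right _ _) (gpp_le_left d q r)) ?_)
  calc min (gpp d p r) (gpp d q r)
      ≤ min (gromovProd d.w p.pt r.pt) (gromovProd d.w q.pt r.pt) :=
        min_le_min (gpp_le_g d p r) (gpp_le_g d q r)
    _ ≤ gromovProd d.w p.pt q.pt := d.hyp p.pt q.pt r.pt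

theorem gpp_self (p : Pre d) : gpp d p p = p.ht := by
  simp only [gpp, gromovProd_self]
  rw [min_eq_left p.htle, min_self]

noncomputable instance : PseudoMetricSpace (Pre d) where
  dist p q := p.ht + q.ht - 2 * gpp d p q
  dist_self p := by simp only [gpp_self]; ring
  dist_comm p q := by simp only [gpp_comm d p q]; ring
  dist_triangle p q r := by
    show p.ht + r.ht - 2 * gpp d p r ≤ (p.ht + q.ht - 2 * gpp d p q) + (q.ht + r.ht - 2 * gpp d q r)
    have h1 : gpp d p q ≤ q.ht := gpp_le_right d p q
    have h2 : gpp d q r ≤ q.ht := gpp_le_left d q r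
    have key : gpp d p q + gpp d q r - q.ht ≤ gpp d p r := by
      refine le_min ?_ (le_min ?_ ?_)
      · linarith [gpp_le_left d p q]
      · linarith [gpp_le_right d q r]
      · have := d.hyp p.pt r.pt q.pt
        rcases min_le_iff.mp (le_refl (min (gromovProd d.w p.pt q.pt) (gromovProd d.w r.pt q.pt))) with h | h
        · have h3 : gpp d p q ≤ gromovProd d.w p.pt q.pt := gpp_le_g d p q
          rcases le_total (gromovProd d.w p.pt q.pt) (gromovProd d.w r.pt q.pt) with hc | hc
          · have : gromovProd d.w p.pt q.pt ≤ gromovProd d.w p.pt r.pt := by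
              rw [min_eq_left hc] at this; exact this
            linarith
          · have h4 : gpp d q r ≤ gromovProd d.w q.pt r.pt := gpp_le_g d q r
            have : gromovProd d.w r.pt q.pt ≤ gromovProd d.w p.pt r.pt := by
              rw [min_eq_right hc] at this; exact this
            rw [gromovProd_comm d.w q.pt r.pt] at h4
            linarith
        · have h3 : gpp d p q ≤ gromovProd d.w p.pt q.pt := gpp_le_g d p q
          rcases le_total (gromovProd d.w p.pt q.pt) (gromovProd d.w r.pt q.pt) with hc | hc
          · have : gromovProd d.w p.pt q.pt ≤ gromovProd d.w p.pt r.pt := by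
              rw [min_eq_left hc] at this; exact this
            linarith
          · have h4 : gpp d q r ≤ gromovProd d.w q.pt r.pt := gpp_le_g d q r
            have : gromovProd d.w r.pt q.pt ≤ gromovProd d.w p.pt r.pt := by
              rw [min_eq_right hc] at this; exact this
            rw [gromovProd_comm d.w q.pt r.pt] at h4
            linarith
    linarith

theorem Pre.dist_def (p q : Pre d) : dist p q = p.ht + q.ht - 2 * gpp d p q := rfl

/-- The tree hull. -/
def Tr (d : HypPt X) : Type u := SeparationQuotient (Pre d)

noncomputable instance : MetricSpace (Tr d) :=
  inferInstanceAs (MetricSpace (SeparationQuotient (Pre d)))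

/-- The canonical projection. -/
noncomputable def Tr.mk {d : HypPt X} (p : Pre d) : Tr d := SeparationQuotient.mk p

theorem Tr.mk_surjective : Function.Surjective (Tr.mk : Pre d → Tr d) :=
  SeparationQuotient.surjective_mk

theorem Tr.dist_mk (p q : Pre d) :
    dist (Tr.mk p) (Tr.mk q) = p.ht + q.ht - 2 * gpp d p q :=
  SeparationQuotient.dist_mk p q

theorem Tr.mk_eq_mk {p q : Pre d} : Tr.mk p = Tr.mk q ↔ dist p q = 0 :=
  SeparationQuotient.mk_eq_mk.trans Metric.inseparable_iff

/-- The isometric embedding of `X` into its tree hull. -/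
noncomputable def ι (x : X) : Tr d := Tr.mk ⟨x, dist d.w x, dist_nonneg, le_refl _⟩

theorem gromovProd_le_min (w x y : Z) :
    gromovProd w x y ≤ min (dist w x) (dist w y) := by
  have h1 := dist_triangle w x y
  have h2 := dist_triangle w y x
  rw [dist_comm y x] at h2
  exact le_min (by simp only [gromovProd]; linarith) (by simp only [gromovProd]; linarith)

theorem isometry_ι : Isometry (ι d) := by
  apply Isometry.of_dist_eq
  intro x y
  rw [ι, ι, Tr.dist_mk]
  have hle := gromovProd_le_min d.w x y
  have : gpp d ⟨x, dist d.w x, dist_nonneg, le_refl _⟩ ⟨y, dist d.w y, dist_nonneg, le_refl _⟩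
      = gromovProd d.w x y := by
    simp only [gpp]
    rw [min_eq_right (le_min_iff.mp hle).2, min_eq_right (le_min_iff.mp hle).1]
  rw [this]
  simp only [gromovProd]
  ring

theorem tr_four_pt (z1 z2 z3 z4 : Tr d) :
    dist z1 z2 + dist z3 z4 ≤ max (dist z1 z3 + dist z2 z4) (dist z1 z4 + dist z2 z3) := by
  obtain ⟨p, rfl⟩ := Tr.mk_surjective d z1
  obtain ⟨q, rfl⟩ := Tr.mk_surjective d z2
  obtain ⟨r, rfl⟩ := Tr.mk_surjective d z3
  obtain ⟨s, rfl⟩ := Tr.mk_surjective d z4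
  simp only [Tr.dist_mk]
  have h := min4 (gpp d) (gpp_comm d) (gpp_hyp d) p q r s
  rcases min_le_iff.mp h with h' | h'
  · apply le_max_of_le_left; linarith
  · apply le_max_of_le_right; linarith

theorem tr_hyp : ∀ r a b c : Tr d,
    min (gromovProd r a c) (gromovProd r b c) ≤ gromovProd r a b :=
  hyp_of_four_pt (tr_four_pt d)

theorem dist_same_pt (x : X) (a b : ℝ) (ha0 : 0 ≤ a) (hale : a ≤ dist d.w x)
    (hb0 : 0 ≤ b) (hble : b ≤ dist d.w x) :
    dist (Tr.mk (d := d) ⟨x, a, ha0, hale⟩) (Tr.mk (d := d) ⟨x, b, hb0, hble⟩) = |a - b| := by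
  rw [Tr.dist_mk]
  have : gpp d ⟨x, a, ha0, hale⟩ ⟨x, b, hb0, hble⟩ = min a b := by
    simp only [gpp, gromovProd_self]
    rw [min_eq_left hble]
  rw [this]
  rcases le_total a b with h | h
  · rw [min_eq_left h, abs_of_nonpos (by linarith)]; ring
  · rw [min_eq_right h, abs_of_nonneg (by linarith)]; ring

theorem gpp_mid {p q : Pre d} {a b : ℝ} (ha1 : gpp d p q ≤ a) (ha2 : a ≤ p.ht)
    (hb1 : gpp d p q ≤ b) (hb2 : b ≤ q.ht) :
    min a (min b (gromovProd d.w p.pt q.pt)) = gpp d p q := by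
  apply le_antisymm
  · rcases le_total p.ht (min q.ht (gromovProd d.w p.pt q.pt)) with h | h
    · have hm : gpp d p q = p.ht := min_eq_left h
      have : a = p.ht := le_antisymm ha2 (hm ▸ ha1)
      rw [this, hm]
      exact min_le_left _ _
    · have hm : gpp d p q = min q.ht (gromovProd d.w p.pt q.pt) := min_eq_right h
      rcases le_total q.ht (gromovProd d.w p.pt q.pt) with h' | h'
      · have hm2 : gpp d p q = q.ht := by rw [hm, min_eq_left h']
        have : b = q.ht := le_antisymm hb2 (hm2 ▸ hb1)
        rw [hm2, ← this]
        exact le_trans (min_le_right _ _) (min_le_left _ _)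
      · have hm2 : gpp d p q = gromovProd d.w p.pt q.pt := by rw [hm, min_eq_right h']
        rw [hm2]
        exact le_trans (min_le_right _ _) (min_le_right _ _)
  · exact le_min ha1 (le_min hb1 (gpp_le_g d p q))

theorem dist_mid {p q : Pre d} {a b : ℝ} (ha1 : gpp d p q ≤ a) (ha2 : a ≤ p.ht)
    (hb1 : gpp d p q ≤ b) (hb2 : b ≤ q.ht)
    (ha0 : 0 ≤ a) (hale : a ≤ dist d.w p.pt) (hb0 : 0 ≤ b) (hble : b ≤ dist d.w q.pt) :
    dist (Tr.mk (d := d) ⟨p.pt, a, ha0, hale⟩) (Tr.mk (d := d) ⟨q.pt, b, hb0, hble⟩)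
      = a + b - 2 * gpp d p q := by
  rw [Tr.dist_mk]
  have : gpp d ⟨p.pt, a, ha0, hale⟩ ⟨q.pt, b, hb0, hble⟩ = gpp d p q := by
    simp only [gpp] at *
    exact gpp_mid d ha1 ha2 hb1 hb2
  rw [this]

theorem Pre.ext2 {d : HypPt X} {p q : Pre d} (h1 : p.pt = q.pt) (h2 : p.ht = q.ht) : p = q := by
  cases p; cases q
  simp only at h1 h2
  subst h1; subst h2; rfl

theorem Tr.mk_congr {d : HypPt X} {p q : Pre d} (h1 : p.pt = q.pt) (h2 : p.ht = q.ht) :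
    Tr.mk p = Tr.mk q := congrArg Tr.mk (Pre.ext2 h1 h2)

/-- The canonical geodesic segment from `mk p` to `mk q` in the tree hull. -/
noncomputable def seg (p q : Pre d) : ℝ → Tr d := fun u =>
  if u ≤ p.ht - gpp d p q then
    Tr.mk ⟨p.pt, min p.ht (max (gpp d p q) (p.ht - u)),
      le_min p.ht0 (le_trans (gpp_nonneg d p q) (le_max_left _ _)),
      le_trans (min_le_left _ _) p.htle⟩
  else
    Tr.mk ⟨q.pt, min q.ht (max (gpp d p q) (u - p.ht + 2 * gpp d p q)),
      le_min q.ht0 (le_trans (gpp_nonneg d p q) (le_max_left _ _)),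
      le_trans (min_le_left _ _) q.htle⟩

theorem seg_eq1 (p q : Pre d) {u : ℝ} (hu0 : 0 ≤ u) (hu : u ≤ p.ht - gpp d p q)
    (h1 : 0 ≤ p.ht - u) (h2 : p.ht - u ≤ dist d.w p.pt) :
    seg d p q u = Tr.mk ⟨p.pt, p.ht - u, h1, h2⟩ := by
  rw [seg]
  simp only [if_pos hu]
  refine Tr.mk_congr rfl ?_
  simp only
  rw [max_eq_right (by linarith), min_eq_right (by linarith)]

theorem seg_eq2 (p q : Pre d) {u : ℝ} (hu : p.ht - gpp d p q < u)
    (hu2 : u ≤ p.ht + q.ht - 2 * gpp d p q)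
    (h1 : 0 ≤ u - p.ht + 2 * gpp d p q) (h2 : u - p.ht + 2 * gpp d p q ≤ dist d.w q.pt) :
    seg d p q u = Tr.mk ⟨q.pt, u - p.ht + 2 * gpp d p q, h1, h2⟩ := by
  rw [seg]
  simp only [if_neg (not_le.mpr hu)]
  refine Tr.mk_congr rfl ?_
  simp only
  rw [max_eq_right (by linarith), min_eq_right (by linarith)]

theorem seg_zero (p q : Pre d) : seg d p q 0 = Tr.mk p := by
  have hm := gpp_le_left d p q
  rw [seg_eq1 d p q (le_refl 0) (by linarith) (by linarith [p.ht0]) (by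
    have := p.htle; linarith)]
  exact Tr.mk_congr rfl (by simp)

theorem seg_D_nonneg (p q : Pre d) : 0 ≤ p.ht + q.ht - 2 * gpp d p q := by
  have := dist_nonneg (x := p) (y := q)
  rwa [Pre.dist_def] at this

theorem seg_last (p q : Pre d) :
    seg d p q (p.ht + q.ht - 2 * gpp d p q) = Tr.mk q := by
  set m := gpp d p q with hmdef
  set D := p.ht + q.ht - 2 * m with hD
  have hD0 : 0 ≤ D := seg_D_nonneg d p q
  have hmq := gpp_le_right d p q
  have hmp := gpp_le_left d p q
  have hm0 := gpp_nonneg d p q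
  by_cases h : D ≤ p.ht - m
  · have hqm : q.ht = m := by simp only [hD] at h; linarith
    rw [seg_eq1 d p q hD0 h (by simp only [hD]; linarith) (by
      have := p.htle; simp only [hD]; linarith)]
    rw [Tr.mk_eq_mk, Pre.dist_def]
    simp only [gpp]
    have hptD : p.ht - D = m := by simp only [hD]; linarith
    rw [hptD, min_eq_left (le_min hmq (gpp_le_g d p q))]
    linarith
  · push_neg at h
    rw [seg_eq2 d p q h (le_refl _) (by simp only [hD]; linarith [q.ht0]) (by
      have := q.htle; simp only [hD]; linarith)]
    exact Tr.mk_congr rfl (by simp only [hD]; ring)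

theorem seg_iso (p q : Pre d) :
    ∀ u ∈ Icc (0:ℝ) (p.ht + q.ht - 2 * gpp d p q),
    ∀ v ∈ Icc (0:ℝ) (p.ht + q.ht - 2 * gpp d p q),
      dist (seg d p q u) (seg d p q v) = |u - v| := by
  set m := gpp d p q with hmdef
  have hmq := gpp_le_right d p q
  have hmp := gpp_le_left d p q
  have hm0 := gpp_nonneg d p q
  have hmg := gpp_le_g d p q
  have key : ∀ u ∈ Icc (0:ℝ) (p.ht + q.ht - 2 * m),
      ∀ v ∈ Icc (0:ℝ) (p.ht + q.ht - 2 * m), u ≤ v →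
      dist (seg d p q u) (seg d p q v) = v - u := by
    intro u hu v hv huv
    rcases le_or_gt v (p.ht - m) with h | h
    · rw [seg_eq1 d p q hu.1 (le_trans huv h) (by linarith [hu.1, hu.2])
        (by have := p.htle; linarith [hu.1]),
        seg_eq1 d p q hv.1 h (by linarith [hv.1]) (by have := p.htle; linarith [hv.1])]
      rw [dist_same_pt]
      rw [show p.ht - u - (p.ht - v) = v - u by ring, abs_of_nonneg (by linarith)]
    · rcases le_or_gt u (p.ht - m) with h' | h'
      · rw [seg_eq1 d p q hu.1 h' (by linarith [hu.1]) (by have := p.htle; linarith [hu.1]),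
          seg_eq2 d p q h hv.2 (by linarith [hv.1]) (by have := q.htle; linarith [hv.2])]
        rw [dist_mid d (p := p) (q := q) (by linarith) (by linarith [hu.1]) (by linarith)
          (by linarith [hv.2])]
        ring
      · rw [seg_eq2 d p q h' hu.2 (by linarith) (by have := q.htle; linarith [hu.2]),
          seg_eq2 d p q h hv.2 (by linarith) (by have := q.htle; linarith [hv.2])]
        rw [dist_same_pt]
        rw [show u - p.ht + 2*m - (v - p.ht + 2*m) = u - v by ring,
          abs_of_nonpos (show u - v ≤ 0 by linarith)]
        ring
  intro u hu v hv
  rcases le_total u v with h | h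
  · rw [key u hu v hv h, abs_of_nonpos (by linarith)]; ring
  · rw [dist_comm, key v hv u hu h, abs_of_nonneg (by linarith)]

/-- The vertical geodesic from the root to `ι x`. -/
noncomputable def vert (x : X) : ℝ → Tr d := fun v =>
  Tr.mk ⟨x, min (dist d.w x) (max 0 v), le_min dist_nonneg (le_max_left _ _), min_le_left _ _⟩

theorem vert_eq (x : X) {v : ℝ} (h0 : 0 ≤ v) (hle : v ≤ dist d.w x)
    (h1 : 0 ≤ v) (h2 : v ≤ dist d.w x) :
    vert d x v = Tr.mk ⟨x, v, h1, h2⟩ := by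
  rw [vert]
  exact Tr.mk_congr rfl (by simp only; rw [max_eq_right h0, min_eq_right hle])

theorem vert_iso (x : X) :
    ∀ u ∈ Icc (0:ℝ) (dist d.w x), ∀ v ∈ Icc (0:ℝ) (dist d.w x),
      dist (vert d x u) (vert d x v) = |u - v| := by
  intro u hu v hv
  rw [vert_eq d x hu.1 hu.2 hu.1 hu.2, vert_eq d x hv.1 hv.2 hv.1 hv.2, dist_same_pt]

theorem vert_zero (x : X) : vert d x 0 = ι d d.w := by
  rw [vert_eq d x (le_refl _) dist_nonneg (le_refl _) dist_nonneg, ι, Tr.mk_eq_mk, Pre.dist_def]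
  have : gpp d ⟨x, 0, le_refl _, dist_nonneg⟩
      ⟨d.w, dist d.w d.w, dist_nonneg, le_refl _⟩ = 0 := by
    simp only [gpp]
    exact min_eq_left (le_min dist_nonneg (gromovProd_nonneg _ _ _))
  rw [this]
  simp [dist_self]

theorem vert_top (x : X) : vert d x (dist d.w x) = ι d x := by
  rw [vert_eq d x dist_nonneg (le_refl _) dist_nonneg (le_refl _)]
  rfl

theorem seg_mem_connected (p q : Pre d) {S : Set (Tr d)} (hS : IsPreconnected S)
    (hp : Tr.mk p ∈ S) (hq : Tr.mk q ∈ S) :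
    ∀ u ∈ Icc (0:ℝ) (p.ht + q.ht - 2 * gpp d p q), seg d p q u ∈ S := by
  intro u hu
  by_cases h1 : seg d p q u = Tr.mk p
  · rwa [h1]
  by_cases h2 : seg d p q u = Tr.mk q
  · rwa [h2]
  set D := p.ht + q.ht - 2 * gpp d p q with hD
  have hD0 : 0 ≤ D := seg_D_nonneg d p q
  have hbtw : dist (Tr.mk p) (seg d p q u) + dist (seg d p q u) (Tr.mk q)
      = dist (Tr.mk p) (Tr.mk q) := by
    have e1 : dist (Tr.mk p) (seg d p q u) = u := by
      rw [← seg_zero d p q, seg_iso d p q 0 ⟨le_refl _, hD0⟩ u hu,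
        abs_of_nonpos (by linarith [hu.1])]
      ring
    have e2 : dist (seg d p q u) (Tr.mk q) = D - u := by
      rw [← seg_last d p q, seg_iso d p q u hu D ⟨hD0, le_refl _⟩,
        abs_of_nonpos (by linarith [hu.2])]
      ring
    have e3 : dist (Tr.mk p) (Tr.mk q) = D := Tr.dist_mk d p q
    rw [e1, e2, e3]
    ring
  exact mem_of_between (tr_hyp d) hbtw (fun h => h1 h) (fun h => h2 h) hS hp hq

theorem seg_continuousOn (p q : Pre d) :
    ContinuousOn (seg d p q) (Icc 0 (p.ht + q.ht - 2 * gpp d p q)) :=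
  short_continuousOn (fun u hu v hv => (seg_iso d p q u hu v hv).le)

theorem arc_eq_seg (p q : Pre d) {A : Set (Tr d)}
    (hA : IsArcIn (Tr.mk p) (Tr.mk q) A) :
    A = seg d p q '' Icc 0 (p.ht + q.ht - 2 * gpp d p q) := by
  obtain ⟨a, b, hab, α, hcont, hinj, himg, ha, hb⟩ := hA
  set D := p.ht + q.ht - 2 * gpp d p q with hD
  have hD0 : 0 ≤ D := seg_D_nonneg d p q
  have hApre : IsPreconnected A := by
    rw [← himg]
    exact isPreconnected_Icc.image α hcont
  have hpA : Tr.mk p ∈ A := by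
    rw [← ha, ← himg]; exact mem_image_of_mem α ⟨le_refl _, hab⟩
  have hqA : Tr.mk q ∈ A := by
    rw [← hb, ← himg]; exact mem_image_of_mem α ⟨hab, le_refl _⟩
  have hseg_sub : seg d p q '' Icc 0 D ⊆ A := by
    rintro z ⟨u, hu, rfl⟩
    exact seg_mem_connected d p q hApre hpA hqA u hu
  apply Subset.antisymm _ hseg_sub
  haveI : CompactSpace (Icc a b) := isCompact_iff_compactSpace.mp isCompact_Icc
  set f : Icc a b → Tr d := (Icc a b).restrict α with hf
  have hfc : Continuous f := continuousOn_iff_continuous_restrict.mp hcont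
  have hfinj : Function.Injective f := fun u v h => Subtype.ext (hinj u.2 v.2 h)
  have hrangef : Set.range f = A := by rw [← himg]; exact Set.range_restrict α (Icc a b)
  set e0 : Icc a b ≃ Set.range f := Equiv.ofInjective f hfinj with he0
  have he0c : Continuous (e0 : Icc a b → Set.range f) := Continuous.subtype_mk hfc _
  set e : Icc a b ≃ₜ Set.range f := Continuous.homeoOfEquivCompactToT2 (f := e0) he0c with he
  have heval : ∀ u : Icc a b, (e u : Tr d) = f u := fun u => rfl
  have hsub2 : seg d p q '' Icc 0 D ⊆ Set.range f := by rw [hrangef]; exact hseg_sub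
  have hsegpre : IsPreconnected (seg d p q '' Icc 0 D) :=
    isPreconnected_Icc.image _ (seg_continuousOn d p q)
  have hpre : IsPreconnected ((Subtype.val ⁻¹' (seg d p q '' Icc 0 D)) : Set (Set.range f)) := by
    apply (Topology.IsInducing.subtypeVal).isPreconnected_image.mp
    rwa [Subtype.image_preimage_coe, inter_eq_right.mpr hsub2]
  set Q : Set (Icc a b) := e.symm '' (Subtype.val ⁻¹' (seg d p q '' Icc 0 D)) with hQ
  have hQpre : IsPreconnected Q := hpre.image _ e.symm.continuous.continuousOn
  have hvalQ : IsPreconnected (Subtype.val '' Q) := hQpre.image _ continuous_subtype_val.continuousOn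
  have hmem : ∀ (u : Icc a b), f u ∈ seg d p q '' Icc 0 D → (u : ℝ) ∈ Subtype.val '' Q := by
    intro u hu
    refine ⟨u, ?_, rfl⟩
    refine ⟨e u, ?_, e.symm_apply_apply u⟩
    simpa only [mem_preimage, heval u] using hu
  have hmema : a ∈ Subtype.val '' Q := by
    apply hmem ⟨a, le_refl _, hab⟩
    have : f ⟨a, le_refl _, hab⟩ = Tr.mk p := by rw [hf]; exact ha
    rw [this]
    exact ⟨0, ⟨le_refl _, hD0⟩, seg_zero d p q⟩
  have hmemb : b ∈ Subtype.val '' Q := by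
    apply hmem ⟨b, hab, le_refl _⟩
    have : f ⟨b, hab, le_refl _⟩ = Tr.mk q := by rw [hf]; exact hb
    rw [this]
    exact ⟨D, ⟨hD0, le_refl _⟩, seg_last d p q⟩
  have hIcc : Icc a b ⊆ Subtype.val '' Q := hvalQ.Icc_subset hmema hmemb
  intro z hz
  rw [← himg] at hz
  obtain ⟨u, hu, rfl⟩ := hz
  obtain ⟨v, hvQ, hval⟩ := hIcc hu
  obtain ⟨z1, hz1, hez⟩ := hvQ
  have h1 : α u = f v := by rw [hf]; subst hval; rfl
  have h2 : f v = (z1 : Tr d) := by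
    rw [← hez, ← heval (e.symm z1), e.apply_symm_apply]
  rw [h1, h2]
  exact hz1

theorem isRTree_Tr : IsRTree (Tr d) := by
  intro z1 z2
  obtain ⟨p, rfl⟩ := Tr.mk_surjective d z1
  obtain ⟨q, rfl⟩ := Tr.mk_surjective d z2
  have hD0 : 0 ≤ p.ht + q.ht - 2 * gpp d p q := seg_D_nonneg d p q
  have harc : IsArcIn (Tr.mk p) (Tr.mk q)
      (seg d p q '' Icc 0 (p.ht + q.ht - 2 * gpp d p q)) := by
    have := iso_isArc hD0 (seg_iso d p q)
    rwa [seg_zero, seg_last] at this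
  constructor
  · exact ⟨_, harc, fun A hA => arc_eq_seg d p q hA⟩
  · intro S hS
    rw [arc_eq_seg d p q hS]
    exact ⟨0, _, hD0, seg d p q, seg_iso d p q, rfl, seg_zero d p q, seg_last d p q⟩

theorem vert_ht (p : Pre d) : vert d p.pt p.ht = Tr.mk p := by
  rw [vert_eq d p.pt p.ht0 p.htle p.ht0 p.htle]

theorem tr_minimal {S : Set (Tr d)} (hS : IsConnected S) (hsub : Set.range (ι d) ⊆ S) :
    S = univ := by
  apply eq_univ_of_forall
  intro z
  obtain ⟨p, rfl⟩ := Tr.mk_surjective d z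
  have hw : ι d d.w ∈ S := hsub (mem_range_self _)
  have hx : ι d p.pt ∈ S := hsub (mem_range_self _)
  by_cases h1 : Tr.mk p = ι d d.w
  · rwa [h1]
  by_cases h2 : Tr.mk p = ι d p.pt
  · rwa [h2]
  have h0m : (0:ℝ) ∈ Icc (0:ℝ) (dist d.w p.pt) := ⟨le_refl _, dist_nonneg⟩
  have hhm : p.ht ∈ Icc (0:ℝ) (dist d.w p.pt) := ⟨p.ht0, p.htle⟩
  have htop : dist d.w p.pt ∈ Icc (0:ℝ) (dist d.w p.pt) := ⟨dist_nonneg, le_refl _⟩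
  have hbtw : dist (ι d d.w) (Tr.mk p) + dist (Tr.mk p) (ι d p.pt)
      = dist (ι d d.w) (ι d p.pt) := by
    have e1 : dist (ι d d.w) (Tr.mk p) = p.ht := by
      rw [← vert_zero d p.pt, ← vert_ht d p, vert_iso d p.pt 0 h0m p.ht hhm,
        abs_of_nonpos (by linarith [p.ht0])]
      ring
    have e2 : dist (Tr.mk p) (ι d p.pt) = dist d.w p.pt - p.ht := by
      rw [← vert_ht d p, ← vert_top d p.pt, vert_iso d p.pt p.ht hhm _ htop,
        abs_of_nonpos (by linarith [p.htle])]
      ring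
    have e3 : dist (ι d d.w) (ι d p.pt) = dist d.w p.pt := (isometry_ι d).dist_eq _ _
    rw [e1, e2, e3]
    ring
  exact mem_of_between (tr_hyp d) hbtw (fun h => h1 h) (fun h => h2 h) hS.2 hw hx

theorem tr_universal (T' : Type*) [MetricSpace T'] (hT' : IsRTree T') (j : X → T')
    (hj : Isometry j) : ∃! k : Tr d → T', Isometry k ∧ k ∘ ι d = j := by
  classical
  have hgeo : ∀ x : X, ∃ γ : ℝ → T',
      (∀ s ∈ Icc (0:ℝ) (dist d.w x), ∀ t ∈ Icc (0:ℝ) (dist d.w x),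
        dist (γ s) (γ t) = |s - t|) ∧
      γ 0 = j d.w ∧ γ (dist d.w x) = j x ∧
      ∀ A, IsArcIn (j d.w) (j x) A → A = γ '' Icc 0 (dist d.w x) := by
    intro x
    obtain ⟨γ, hiso, hg0, hg1, harcs⟩ := exists_geo hT' (j d.w) (j x)
    rw [hj.dist_eq d.w x] at hiso hg1 harcs
    exact ⟨γ, hiso, hg0, hg1, harcs⟩
  choose γ hγiso hγ0 hγtop hγarc using hgeo
  have hdists : ∀ x y : X, ∀ s, 0 ≤ s → s ≤ dist d.w x → ∀ t, 0 ≤ t → t ≤ dist d.w y →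
      dist (γ x s) (γ y t) = s + t - 2 * min s (min t (gromovProd d.w x y)) := by
    intro x y
    obtain ⟨c, hc0, hc1, hc2, hcoin, hform⟩ :=
      geo_dist hT' dist_nonneg dist_nonneg (hγiso x) (hγiso y) (by rw [hγ0 x, hγ0 y])
    have hc : c = gromovProd d.w x y := by
      have hdd := hform (dist d.w x) dist_nonneg le_rfl (dist d.w y) dist_nonneg le_rfl
      rw [hγtop x, hγtop y, hj.dist_eq, min_eq_right hc2, min_eq_right hc1] at hdd
      simp only [gromovProd]
      linarith
    intro s hs0 hs1 t ht0 ht1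
    rw [hform s hs0 hs1 t ht0 ht1, hc]
  have hlift : ∀ p q : Pre d, Inseparable p q → γ p.pt p.ht = γ q.pt q.ht := by
    intro p q hins
    rw [Metric.inseparable_iff, Pre.dist_def] at hins
    have hd := hdists p.pt q.pt p.ht p.ht0 p.htle q.ht q.ht0 q.htle
    have : min p.ht (min q.ht (gromovProd d.w p.pt q.pt)) = gpp d p q := rfl
    rw [this] at hd
    apply dist_eq_zero.mp
    rw [hd]
    linarith
  set k : Tr d → T' := SeparationQuotient.lift (fun p => γ p.pt p.ht) hlift with hk
  have hkmk : ∀ p : Pre d, k (Tr.mk p) = γ p.pt p.ht := fun p =>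
    SeparationQuotient.lift_mk hlift p
  have hkiso : Isometry k := by
    apply Isometry.of_dist_eq
    intro z1 z2
    obtain ⟨p, rfl⟩ := Tr.mk_surjective d z1
    obtain ⟨q, rfl⟩ := Tr.mk_surjective d z2
    rw [hkmk p, hkmk q, hdists p.pt q.pt p.ht p.ht0 p.htle q.ht q.ht0 q.htle, Tr.dist_mk]
    rfl
  have hkcomp : k ∘ ι d = j := by
    funext x
    have : k (ι d x) = γ x (dist d.w x) := hkmk _
    rw [Function.comp_apply, this, hγtop x]
  refine ⟨k, ⟨hkiso, hkcomp⟩, ?_⟩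
  rintro k' ⟨hk'iso, hk'comp⟩
  funext z
  obtain ⟨p, rfl⟩ := Tr.mk_surjective d z
  set L := dist d.w p.pt with hL
  have hL0 : 0 ≤ L := dist_nonneg
  set f : ℝ → T' := fun v => k' (vert d p.pt v) with hfd
  have hfiso : ∀ s ∈ Icc (0:ℝ) L, ∀ t ∈ Icc (0:ℝ) L, dist (f s) (f t) = |s - t| := by
    intro s hs t ht
    rw [hfd]
    simp only
    rw [hk'iso.dist_eq, vert_iso d p.pt s hs t ht]
  have hf0 : f 0 = j d.w := by
    rw [hfd]
    simp only
    rw [vert_zero d p.pt, ← hk'comp, Function.comp_apply]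
  have hftop : f L = j p.pt := by
    rw [hfd]
    simp only
    rw [hL, vert_top d p.pt, ← hk'comp, Function.comp_apply]
  have hfarc : IsArcIn (j d.w) (j p.pt) (f '' Icc 0 L) := by
    have := iso_isArc hL0 hfiso
    rwa [hf0, hftop] at this
  have himg : f '' Icc 0 L = γ p.pt '' Icc 0 L := hγarc p.pt _ hfarc
  have heq := geo_param_unique hfiso (hγiso p.pt) (by rw [hf0, hγ0 p.pt]) himg p.ht ⟨p.ht0, p.htle⟩
  have hvert : f p.ht = k' (Tr.mk p) := by rw [hfd]; simp only [vert_ht d p]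
  rw [← hvert, heq, ← hkmk p]

end CTD

/-- "Connecting the dots": every 0-hyperbolic metric space embeds isometrically in an
essentially unique minimal ℝ-tree. -/
theorem connecting_the_dots (X : Type u) [MetricSpace X] (w : X)
    (h0 : ∀ x y z : X, gromovProd w x y ≥ min (gromovProd w x z) (gromovProd w y z)) :
    ∃ (T : Type u) (mT : MetricSpace T), @IsTreeHull X _ T mT := by
  set d : CTD.HypPt X := ⟨w, fun x y z => h0 x y z⟩ with hd
  exact ⟨CTD.Tr d, inferInstance, CTD.isRTree_Tr d, CTD.ι d, CTD.isometry_ι d,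
    fun S hS hsub => CTD.tr_minimal d hS hsub,
    fun T' _ hT' j hj => CTD.tr_universal d T' hT' j hj⟩
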